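/- Let λ1, κ1, λ2, κ2, λ3, κ3 ∈ k and β_i := λ_i s⊗1 − 1⊗s + κ_i⊗1 for i = 1,2,3. Suppose γ = Σ_{i=0}^{m} Σ_{j=0}^{p_i} x_{ij} s^(i)⊗s^(j) ∈ H⊗H is nonzero and satisfies (β1Δ⊗1)γ = (1⊗γΔ)β2 − (12)(1⊗β3Δ)γ, where m is the largest first-factor degree occurring in γ and p_i is the largest j with x_{ij} ≠ 0. If p_m = 1, then λ3 = 0 and m ≤ 2. -/

import Mathlib

open scoped TensorProduct
open Polynomial

noncomputable section

variable (k : Type) [Field k] [CharZero k]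

/-- `H ⊗ H` where `H = k[s]`. -/
abbrev HH := Polynomial k ⊗[k] Polynomial k

/-- `H ⊗ H ⊗ H`. -/
abbrev HHH := Polynomial k ⊗[k] (Polynomial k ⊗[k] Polynomial k)

/-- The comultiplication `Δ : H → H ⊗ H`, with `Δ(s) = s⊗1 + 1⊗s`. -/
def Hcomul : Polynomial k →ₐ[k] HH k :=
  aeval ((X : Polynomial k) ⊗ₜ[k] (1 : Polynomial k) +
    (1 : Polynomial k) ⊗ₜ[k] (X : Polynomial k))

/-- The swap `(12)` on `H ⊗ H`. -/
def sw2 : HH k ≃ₐ[k] HH k := Algebra.TensorProduct.comm k _ _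

/-- Associator `(H⊗H)⊗H ≃ H⊗(H⊗H)`. -/
def tAssoc : (HH k ⊗[k] Polynomial k) ≃ₐ[k] HHH k :=
  Algebra.TensorProduct.assoc k k k (Polynomial k) (Polynomial k) (Polynomial k)

/-- The swap of the first two tensor factors on `H ⊗ H ⊗ H`. -/
def sw12 : HHH k ≃ₐ[k] HHH k :=
  (tAssoc k).symm.trans
    ((Algebra.TensorProduct.congr (sw2 k) AlgEquiv.refl).trans (tAssoc k))

/-- `Δ ⊗ id : H⊗H → H⊗H⊗H`. -/
def DL : HH k →ₐ[k] HHH k :=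
  (tAssoc k).toAlgHom.comp (Algebra.TensorProduct.map (Hcomul k) (AlgHom.id k _))

/-- `id ⊗ Δ : H⊗H → H⊗H⊗H`. -/
def DR : HH k →ₐ[k] HHH k :=
  Algebra.TensorProduct.map (AlgHom.id k _) (Hcomul k)

/-- `β ↦ β ⊗ 1` into the first two factors of `H⊗H⊗H`. -/
def inc12 : HH k →ₐ[k] HHH k :=
  (tAssoc k).toAlgHom.comp Algebra.TensorProduct.includeLeft

/-- `β ↦ 1 ⊗ β` into the last two factors of `H⊗H⊗H`. -/
def inc23 : HH k →ₐ[k] HHH k := Algebra.TensorProduct.includeRight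

/-- `(βΔ⊗1)γ := (β⊗1)·((Δ⊗id)(γ))`. -/
def opL (β γ : HH k) : HHH k := inc12 k β * DL k γ

/-- `(1⊗βΔ)γ := (1⊗β)·((id⊗Δ)(γ))`. -/
def opR (β γ : HH k) : HHH k := inc23 k β * DR k γ

/-- The divided power `s^(n) = sⁿ/n!`. -/
def sp (n : ℕ) : Polynomial k := (n.factorial : k)⁻¹ • X ^ n

/-- `α = s⊗1 − 1⊗s`. -/
def alphaE : HH k :=
  (X : Polynomial k) ⊗ₜ[k] (1 : Polynomial k) -
    (1 : Polynomial k) ⊗ₜ[k] (X : Polynomial k)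

/-- `β = λ s⊗1 − 1⊗s + κ 1⊗1`. -/
def betaE (lam kap : k) : HH k :=
  lam • ((X : Polynomial k) ⊗ₜ[k] (1 : Polynomial k)) -
    (1 : Polynomial k) ⊗ₜ[k] (X : Polynomial k) +
    kap • ((1 : Polynomial k) ⊗ₜ[k] (1 : Polynomial k))


set_option maxHeartbeats 1000000
set_option maxRecDepth 4000
set_option synthInstance.maxHeartbeats 200000
set_option linter.unusedSectionVars false
abbrev R3 := MvPolynomial (Fin 3) k

def Psi : HHH k →ₐ[k] R3 k :=
  Algebra.TensorProduct.lift (aeval (MvPolynomial.X 0 : R3 k))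
    (Algebra.TensorProduct.lift (aeval (MvPolynomial.X 1 : R3 k))
      (aeval (MvPolynomial.X 2 : R3 k)) fun _ _ => Commute.all _ _)
    fun _ _ => Commute.all _ _


lemma Psi_tmul (a b c : Polynomial k) :
    Psi k (a ⊗ₜ[k] (b ⊗ₜ[k] c)) =
      aeval (MvPolynomial.X 0 : R3 k) a * (aeval (MvPolynomial.X 1 : R3 k) b *
        aeval (MvPolynomial.X 2 : R3 k) c) := by
  simp [Psi, Algebra.TensorProduct.lift_tmul]

def Psis : HHH k →ₐ[k] R3 k := (Psi k).comp (sw12 k).toAlgHom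

-- generator images
lemma gen_i12_1 : (Psi k).comp (inc12 k) ((X : Polynomial k) ⊗ₜ[k] 1) = MvPolynomial.X 0 := by
  simp [inc12, inc23, DL, DR, Psis, sw12, sw2, tAssoc, Hcomul, Psi_tmul, Algebra.TensorProduct.assoc_tmul, Algebra.TensorProduct.assoc_symm_tmul, Algebra.TensorProduct.map_tmul, Algebra.TensorProduct.comm_tmul, Algebra.TensorProduct.congr_apply, Algebra.TensorProduct.one_def, TensorProduct.add_tmul, TensorProduct.tmul_add, map_add]

lemma gen_i12_2 : (Psi k).comp (inc12 k) ((1 : Polynomial k) ⊗ₜ[k] X) = MvPolynomial.X 1 := by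
  simp [inc12, inc23, DL, DR, Psis, sw12, sw2, tAssoc, Hcomul, Psi_tmul, Algebra.TensorProduct.assoc_tmul, Algebra.TensorProduct.assoc_symm_tmul, Algebra.TensorProduct.map_tmul, Algebra.TensorProduct.comm_tmul, Algebra.TensorProduct.congr_apply, Algebra.TensorProduct.one_def, TensorProduct.add_tmul, TensorProduct.tmul_add, map_add]

lemma gen_dl_1 : (Psi k).comp (DL k) ((X : Polynomial k) ⊗ₜ[k] 1) =
    MvPolynomial.X 0 + MvPolynomial.X 1 := by
  simp [inc12, inc23, DL, DR, Psis, sw12, sw2, tAssoc, Hcomul, Psi_tmul, Algebra.TensorProduct.assoc_tmul, Algebra.TensorProduct.assoc_symm_tmul, Algebra.TensorProduct.map_tmul, Algebra.TensorProduct.comm_tmul, Algebra.TensorProduct.congr_apply, Algebra.TensorProduct.one_def, TensorProduct.add_tmul, TensorProduct.tmul_add, map_add]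

lemma gen_dl_2 : (Psi k).comp (DL k) ((1 : Polynomial k) ⊗ₜ[k] X) = MvPolynomial.X 2 := by
  simp [inc12, inc23, DL, DR, Psis, sw12, sw2, tAssoc, Hcomul, Psi_tmul, Algebra.TensorProduct.assoc_tmul, Algebra.TensorProduct.assoc_symm_tmul, Algebra.TensorProduct.map_tmul, Algebra.TensorProduct.comm_tmul, Algebra.TensorProduct.congr_apply, Algebra.TensorProduct.one_def, TensorProduct.add_tmul, TensorProduct.tmul_add, map_add]

lemma gen_i23_1 : (Psi k).comp (inc23 k) ((X : Polynomial k) ⊗ₜ[k] 1) = MvPolynomial.X 1 := by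
  simp [inc12, inc23, DL, DR, Psis, sw12, sw2, tAssoc, Hcomul, Psi_tmul, Algebra.TensorProduct.assoc_tmul, Algebra.TensorProduct.assoc_symm_tmul, Algebra.TensorProduct.map_tmul, Algebra.TensorProduct.comm_tmul, Algebra.TensorProduct.congr_apply, Algebra.TensorProduct.one_def, TensorProduct.add_tmul, TensorProduct.tmul_add, map_add]

lemma gen_i23_2 : (Psi k).comp (inc23 k) ((1 : Polynomial k) ⊗ₜ[k] X) = MvPolynomial.X 2 := by
  simp [inc12, inc23, DL, DR, Psis, sw12, sw2, tAssoc, Hcomul, Psi_tmul, Algebra.TensorProduct.assoc_tmul, Algebra.TensorProduct.assoc_symm_tmul, Algebra.TensorProduct.map_tmul, Algebra.TensorProduct.comm_tmul, Algebra.TensorProduct.congr_apply, Algebra.TensorProduct.one_def, TensorProduct.add_tmul, TensorProduct.tmul_add, map_add]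

lemma gen_dr_1 : (Psi k).comp (DR k) ((X : Polynomial k) ⊗ₜ[k] 1) = MvPolynomial.X 0 := by
  simp [inc12, inc23, DL, DR, Psis, sw12, sw2, tAssoc, Hcomul, Psi_tmul, Algebra.TensorProduct.assoc_tmul, Algebra.TensorProduct.assoc_symm_tmul, Algebra.TensorProduct.map_tmul, Algebra.TensorProduct.comm_tmul, Algebra.TensorProduct.congr_apply, Algebra.TensorProduct.one_def, TensorProduct.add_tmul, TensorProduct.tmul_add, map_add]

lemma gen_dr_2 : (Psi k).comp (DR k) ((1 : Polynomial k) ⊗ₜ[k] X) =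
    MvPolynomial.X 1 + MvPolynomial.X 2 := by
  simp [inc12, inc23, DL, DR, Psis, sw12, sw2, tAssoc, Hcomul, Psi_tmul, Algebra.TensorProduct.assoc_tmul, Algebra.TensorProduct.assoc_symm_tmul, Algebra.TensorProduct.map_tmul, Algebra.TensorProduct.comm_tmul, Algebra.TensorProduct.congr_apply, Algebra.TensorProduct.one_def, TensorProduct.add_tmul, TensorProduct.tmul_add, map_add]

lemma gen_s23_1 : (Psis k).comp (inc23 k) ((X : Polynomial k) ⊗ₜ[k] 1) = MvPolynomial.X 0 := by
  simp [inc12, inc23, DL, DR, Psis, sw12, sw2, tAssoc, Hcomul, Psi_tmul, Algebra.TensorProduct.assoc_tmul, Algebra.TensorProduct.assoc_symm_tmul, Algebra.TensorProduct.map_tmul, Algebra.TensorProduct.comm_tmul, Algebra.TensorProduct.congr_apply, Algebra.TensorProduct.one_def, TensorProduct.add_tmul, TensorProduct.tmul_add, map_add]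

lemma gen_s23_2 : (Psis k).comp (inc23 k) ((1 : Polynomial k) ⊗ₜ[k] X) = MvPolynomial.X 2 := by
  simp [inc12, inc23, DL, DR, Psis, sw12, sw2, tAssoc, Hcomul, Psi_tmul, Algebra.TensorProduct.assoc_tmul, Algebra.TensorProduct.assoc_symm_tmul, Algebra.TensorProduct.map_tmul, Algebra.TensorProduct.comm_tmul, Algebra.TensorProduct.congr_apply, Algebra.TensorProduct.one_def, TensorProduct.add_tmul, TensorProduct.tmul_add, map_add]

lemma gen_sdr_1 : (Psis k).comp (DR k) ((X : Polynomial k) ⊗ₜ[k] 1) = MvPolynomial.X 1 := by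
  simp [inc12, inc23, DL, DR, Psis, sw12, sw2, tAssoc, Hcomul, Psi_tmul, Algebra.TensorProduct.assoc_tmul, Algebra.TensorProduct.assoc_symm_tmul, Algebra.TensorProduct.map_tmul, Algebra.TensorProduct.comm_tmul, Algebra.TensorProduct.congr_apply, Algebra.TensorProduct.one_def, TensorProduct.add_tmul, TensorProduct.tmul_add, map_add]

lemma gen_sdr_2 : (Psis k).comp (DR k) ((1 : Polynomial k) ⊗ₜ[k] X) =
    MvPolynomial.X 0 + MvPolynomial.X 2 := by
  simp [inc12, inc23, DL, DR, Psis, sw12, sw2, tAssoc, Hcomul, Psi_tmul, Algebra.TensorProduct.assoc_tmul, Algebra.TensorProduct.assoc_symm_tmul, Algebra.TensorProduct.map_tmul, Algebra.TensorProduct.comm_tmul, Algebra.TensorProduct.congr_apply, Algebra.TensorProduct.one_def, TensorProduct.add_tmul, TensorProduct.tmul_add, map_add]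


lemma F_sp (F : HH k →ₐ[k] R3 k) (i j : ℕ) :
    F (sp k i ⊗ₜ[k] sp k j) =
      ((i.factorial : k)⁻¹ * (j.factorial : k)⁻¹) •
        (F ((X : Polynomial k) ⊗ₜ[k] 1) ^ i * F ((1 : Polynomial k) ⊗ₜ[k] X) ^ j) := by
  have h2 : ((X : Polynomial k) ⊗ₜ[k] (1 : Polynomial k)) ^ i *
      ((1 : Polynomial k) ⊗ₜ[k] (X : Polynomial k)) ^ j
      = (X ^ i : Polynomial k) ⊗ₜ[k] (X ^ j : Polynomial k) := by
    rw [Algebra.TensorProduct.tmul_pow, Algebra.TensorProduct.tmul_pow, one_pow, one_pow,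
      Algebra.TensorProduct.tmul_mul_tmul, mul_one, one_mul]
  rw [sp, sp, TensorProduct.tmul_smul, ← TensorProduct.smul_tmul', map_smul, map_smul,
    ← map_pow, ← map_pow, ← map_mul, h2, smul_smul, mul_comm]

lemma F_beta (F : HH k →ₐ[k] R3 k) (lam kap : k) :
    F (betaE k lam kap) =
      MvPolynomial.C lam * F ((X : Polynomial k) ⊗ₜ[k] 1) -
        F ((1 : Polynomial k) ⊗ₜ[k] X) + MvPolynomial.C kap := by
  have : (1 : Polynomial k) ⊗ₜ[k] (1 : Polynomial k) = (1 : HH k) := rfl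
  simp [betaE, this, MvPolynomial.smul_eq_C_mul, map_add, map_sub, map_smul]

def TT (m : ℕ) (p : ℕ → ℕ) (x : ℕ → ℕ → k) (P Q : R3 k) : R3 k :=
  ∑ i ∈ Finset.range (m + 1), ∑ j ∈ Finset.range (p i + 1),
    x i j • (((i.factorial : k)⁻¹ * (j.factorial : k)⁻¹) • (P ^ i * Q ^ j))

lemma F_gamma (F : HH k →ₐ[k] R3 k) (m : ℕ) (p : ℕ → ℕ) (x : ℕ → ℕ → k) :
    F (∑ i ∈ Finset.range (m + 1), ∑ j ∈ Finset.range (p i + 1),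
        x i j • (sp k i ⊗ₜ[k] sp k j)) =
      TT k m p x (F ((X : Polynomial k) ⊗ₜ[k] 1)) (F ((1 : Polynomial k) ⊗ₜ[k] X)) := by
  rw [map_sum, TT]
  refine Finset.sum_congr rfl fun i _ => ?_
  rw [map_sum]
  refine Finset.sum_congr rfl fun j _ => ?_
  rw [map_smul, F_sp]

lemma master (lam1 kap1 lam2 kap2 lam3 kap3 : k)
    (m : ℕ) (p : ℕ → ℕ) (x : ℕ → ℕ → k) (γ : HH k)
    (hγ : γ = ∑ i ∈ Finset.range (m + 1), ∑ j ∈ Finset.range (p i + 1),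
      x i j • (sp k i ⊗ₜ[k] sp k j))
    (heq : opL k (betaE k lam1 kap1) γ =
      opR k γ (betaE k lam2 kap2) - sw12 k (opR k (betaE k lam3 kap3) γ)) :
    (MvPolynomial.C lam1 * MvPolynomial.X 0 - MvPolynomial.X 1 + MvPolynomial.C kap1) *
        TT k m p x (MvPolynomial.X 0 + MvPolynomial.X 1) (MvPolynomial.X 2)
      = TT k m p x (MvPolynomial.X 1) (MvPolynomial.X 2) *
          (MvPolynomial.C lam2 * MvPolynomial.X 0 -
            (MvPolynomial.X 1 + MvPolynomial.X 2) + MvPolynomial.C kap2)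
        - (MvPolynomial.C lam3 * MvPolynomial.X 0 - MvPolynomial.X 2 + MvPolynomial.C kap3) *
            TT k m p x (MvPolynomial.X 1) (MvPolynomial.X 0 + MvPolynomial.X 2) := by
  have h := congrArg (Psi k) heq
  rw [map_sub] at h
  have e1 : Psi k (opL k (betaE k lam1 kap1) γ) =
      ((Psi k).comp (inc12 k)) (betaE k lam1 kap1) * ((Psi k).comp (DL k)) γ := by
    rw [opL, map_mul]; rfl
  have e2 : Psi k (opR k γ (betaE k lam2 kap2)) =
      ((Psi k).comp (inc23 k)) γ * ((Psi k).comp (DR k)) (betaE k lam2 kap2) := by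
    rw [opR, map_mul]; rfl
  have e3 : Psi k (sw12 k (opR k (betaE k lam3 kap3) γ)) =
      ((Psis k).comp (inc23 k)) (betaE k lam3 kap3) * ((Psis k).comp (DR k)) γ := by
    show Psis k (opR k (betaE k lam3 kap3) γ) = _
    rw [opR, map_mul]; rfl
  rw [e1, e2, e3, hγ, F_gamma, F_gamma, F_gamma, F_beta, F_beta, F_beta,
    gen_i12_1, gen_i12_2, gen_dl_1, gen_dl_2, gen_i23_1, gen_i23_2, gen_dr_1, gen_dr_2,
    gen_s23_1, gen_s23_2, gen_sdr_1, gen_sdr_2] at h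
  exact h

def sig (a b c : ℕ) : Fin 3 →₀ ℕ :=
  Finsupp.single 0 a + Finsupp.single 1 b + Finsupp.single 2 c

lemma sig_inj {a b c a' b' c' : ℕ} : sig a b c = sig a' b' c' ↔ a = a' ∧ b = b' ∧ c = c' := by
  constructor
  · intro h
    have h0 := DFunLike.congr_fun h (0 : Fin 3)
    have h1 := DFunLike.congr_fun h (1 : Fin 3)
    have h2 := DFunLike.congr_fun h (2 : Fin 3)
    simp [sig, Finsupp.single_apply, Fin.ext_iff] at h0 h1 h2
    exact ⟨h0, h1, h2⟩
  · rintro ⟨rfl, rfl, rfl⟩; rfl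

lemma coeff_sig_monomial (A B C a b c : ℕ) (r : k) :
    MvPolynomial.coeff (sig A B C) (MvPolynomial.monomial (sig a b c) r) =
      if a = A ∧ b = B ∧ c = C then r else 0 := by
  rw [MvPolynomial.coeff_monomial]
  exact if_congr sig_inj rfl rfl

lemma mono_eq (a b c : ℕ) (r : k) :
    MvPolynomial.C r * (MvPolynomial.X 0 : R3 k) ^ a * MvPolynomial.X 1 ^ b *
      MvPolynomial.X 2 ^ c = MvPolynomial.monomial (sig a b c) r := by
  rw [MvPolynomial.X_pow_eq_monomial, MvPolynomial.X_pow_eq_monomial,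
    MvPolynomial.X_pow_eq_monomial, MvPolynomial.C_mul_monomial,
    MvPolynomial.monomial_mul, MvPolynomial.monomial_mul, sig]
  ring_nf

lemma coeff_uv_w (A B C i j : ℕ) :
    MvPolynomial.coeff (sig A B C)
      (((MvPolynomial.X 0 + MvPolynomial.X 1) ^ i * MvPolynomial.X 2 ^ j : R3 k)) =
      if A + B = i ∧ C = j then (i.choose A : k) else 0 := by
  rw [add_pow, Finset.sum_mul, MvPolynomial.coeff_sum]
  have hterm : ∀ t ∈ Finset.range (i + 1),
      MvPolynomial.coeff (sig A B C)
        ((MvPolynomial.X 0 : R3 k) ^ t * MvPolynomial.X 1 ^ (i - t) *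
          ((i.choose t : ℕ) : R3 k) * MvPolynomial.X 2 ^ j)
      = if t = A ∧ i - t = B ∧ j = C then ((i.choose t : ℕ) : k) else 0 := by
    intro t _
    have hcast : ((i.choose t : ℕ) : R3 k) = MvPolynomial.C ((i.choose t : ℕ) : k) :=
      (map_natCast _ _).symm
    have hm : (MvPolynomial.X 0 : R3 k) ^ t * MvPolynomial.X 1 ^ (i - t) *
        ((i.choose t : ℕ) : R3 k) * MvPolynomial.X 2 ^ j
        = MvPolynomial.monomial (sig t (i - t) j) ((i.choose t : ℕ) : k) := by
      rw [hcast, ← mono_eq]; ring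
    rw [hm, coeff_sig_monomial]
  rw [Finset.sum_congr rfl hterm]
  by_cases h : A + B = i ∧ C = j
  · obtain ⟨hi, hj⟩ := h
    rw [if_pos ⟨hi, hj⟩, Finset.sum_eq_single A]
    · rw [if_pos ⟨rfl, by omega, hj.symm⟩]
    · intro t _ hne; rw [if_neg]; tauto
    · intro hA; exact absurd (Finset.mem_range.2 (by omega)) hA
  · rw [if_neg h]
    apply Finset.sum_eq_zero
    intro t ht
    rw [if_neg]
    rintro ⟨rfl, hB, hj⟩
    rw [Finset.mem_range] at ht
    exact h ⟨by omega, hj.symm⟩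

lemma coeff_v_uw (A B C i j : ℕ) :
    MvPolynomial.coeff (sig A B C)
      ((MvPolynomial.X 1 ^ i * (MvPolynomial.X 0 + MvPolynomial.X 2) ^ j : R3 k)) =
      if B = i ∧ A + C = j then (j.choose A : k) else 0 := by
  rw [add_pow, Finset.mul_sum, MvPolynomial.coeff_sum]
  have hterm : ∀ t ∈ Finset.range (j + 1),
      MvPolynomial.coeff (sig A B C)
        ((MvPolynomial.X 1 : R3 k) ^ i * ((MvPolynomial.X 0 : R3 k) ^ t *
          MvPolynomial.X 2 ^ (j - t) * ((j.choose t : ℕ) : R3 k)))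
      = if t = A ∧ i = B ∧ j - t = C then ((j.choose t : ℕ) : k) else 0 := by
    intro t _
    have hcast : ((j.choose t : ℕ) : R3 k) = MvPolynomial.C ((j.choose t : ℕ) : k) :=
      (map_natCast _ _).symm
    have hm : (MvPolynomial.X 1 : R3 k) ^ i * ((MvPolynomial.X 0 : R3 k) ^ t *
        MvPolynomial.X 2 ^ (j - t) * ((j.choose t : ℕ) : R3 k))
        = MvPolynomial.monomial (sig t i (j - t)) ((j.choose t : ℕ) : k) := by
      rw [hcast, ← mono_eq]; ring
    rw [hm, coeff_sig_monomial]
  rw [Finset.sum_congr rfl hterm]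
  by_cases h : B = i ∧ A + C = j
  · obtain ⟨hi, hj⟩ := h
    rw [if_pos ⟨hi, hj⟩, Finset.sum_eq_single A]
    · rw [if_pos ⟨rfl, hi.symm, by omega⟩]
    · intro t _ hne; rw [if_neg]; tauto
    · intro hA; exact absurd (Finset.mem_range.2 (by omega)) hA
  · rw [if_neg h]
    apply Finset.sum_eq_zero
    intro t ht
    rw [if_neg]
    rintro ⟨rfl, hB, hj⟩
    rw [Finset.mem_range] at ht
    exact h ⟨hB.symm, by omega⟩

lemma coeff_v_w (A B C i j : ℕ) :
    MvPolynomial.coeff (sig A B C)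
      ((MvPolynomial.X 1 ^ i * MvPolynomial.X 2 ^ j : R3 k)) =
      if 0 = A ∧ i = B ∧ j = C then (1 : k) else 0 := by
  have hm : (MvPolynomial.X 1 : R3 k) ^ i * MvPolynomial.X 2 ^ j
      = MvPolynomial.monomial (sig 0 i j) (1 : k) := by
    rw [← mono_eq, MvPolynomial.C_1]; ring
  rw [hm, coeff_sig_monomial]

lemma mySumCollapse (m : ℕ) (p : ℕ → ℕ) (f : ℕ → ℕ → k) (I J : ℕ)
    (h0 : ∀ i j, f i j ≠ 0 → i ≤ m ∧ j ≤ p i) :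
    (∑ i ∈ Finset.range (m + 1), ∑ j ∈ Finset.range (p i + 1),
      if I = i ∧ J = j then f i j else 0) = f I J := by
  by_cases hIm : I ≤ m ∧ J ≤ p I
  · rw [Finset.sum_eq_single I]
    · rw [Finset.sum_eq_single J]
      · rw [if_pos ⟨rfl, rfl⟩]
      · intro j _ hne; rw [if_neg]; tauto
      · intro hJ; exact absurd (Finset.mem_range.2 (by omega)) hJ
    · intro i _ hne
      apply Finset.sum_eq_zero; intro j _; rw [if_neg]; tauto
    · intro hI; exact absurd (Finset.mem_range.2 (by omega)) hI
  · have hf : f I J = 0 := by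
      by_contra hc; exact hIm (h0 _ _ hc)
    rw [hf]
    apply Finset.sum_eq_zero; intro i _
    apply Finset.sum_eq_zero; intro j _
    rw [ite_eq_right_iff]
    rintro ⟨rfl, rfl⟩
    by_contra hc; exact hIm (h0 _ _ hc)

lemma fact_inv_choose (A B : ℕ) :
    ((A + B).factorial : k)⁻¹ * ((A + B).choose A : k) =
      ((A.factorial : ℕ) : k)⁻¹ * ((B.factorial : ℕ) : k)⁻¹ := by
  have h0 : (A + B).choose A * A.factorial * B.factorial = (A + B).factorial := by
    rw [Nat.choose_symm_add]
    exact Nat.add_choose_mul_factorial_mul_factorial A B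
  have hc : (((A + B).choose A : ℕ) : k) * (A.factorial : k) * (B.factorial : k) =
      ((A + B).factorial : k) := by exact_mod_cast congrArg (fun n : ℕ => (n : k)) h0
  have hA : ((A.factorial : ℕ) : k) ≠ 0 := Nat.cast_ne_zero.2 A.factorial_ne_zero
  have hB : ((B.factorial : ℕ) : k) ≠ 0 := Nat.cast_ne_zero.2 B.factorial_ne_zero
  have hAB : (((A + B).factorial : ℕ) : k) ≠ 0 := Nat.cast_ne_zero.2 (A + B).factorial_ne_zero
  field_simp
  linear_combination hc

lemma coeff_TT_uv (m : ℕ) (p : ℕ → ℕ) (x : ℕ → ℕ → k)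
    (hsupp : ∀ i j, x i j ≠ 0 → i ≤ m ∧ j ≤ p i) (A B C : ℕ) :
    MvPolynomial.coeff (sig A B C)
      (TT k m p x (MvPolynomial.X 0 + MvPolynomial.X 1) (MvPolynomial.X 2)) =
      x (A + B) C *
        ((A.factorial : k)⁻¹ * (B.factorial : k)⁻¹ * (C.factorial : k)⁻¹) := by
  rw [TT]
  have : ∀ i ∈ Finset.range (m + 1), ∀ j ∈ Finset.range (p i + 1), True := fun _ _ _ _ => trivial
  calc MvPolynomial.coeff (sig A B C) _
      = ∑ i ∈ Finset.range (m + 1), ∑ j ∈ Finset.range (p i + 1),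
          if A + B = i ∧ C = j then
            x i j * ((i.factorial : k)⁻¹ * (j.factorial : k)⁻¹ * (i.choose A : k)) else 0 := by
        rw [MvPolynomial.coeff_sum]
        refine Finset.sum_congr rfl fun i _ => ?_
        rw [MvPolynomial.coeff_sum]
        refine Finset.sum_congr rfl fun j _ => ?_
        rw [MvPolynomial.coeff_smul, MvPolynomial.coeff_smul, coeff_uv_w]
        by_cases h : A + B = i ∧ C = j
        · rw [if_pos h, if_pos h, smul_eq_mul, smul_eq_mul]
        · rw [if_neg h, if_neg h, smul_eq_mul, smul_eq_mul]; simp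
    _ = x (A + B) C * (((A + B).factorial : k)⁻¹ * (C.factorial : k)⁻¹ *
          ((A + B).choose A : k)) := by
        refine mySumCollapse k m p _ (A + B) C fun i j hf => ?_
        refine hsupp i j fun hx => hf ?_
        rw [hx, zero_mul]
    _ = _ := by
        have := fact_inv_choose k A B
        push_cast at this ⊢
        calc x (A + B) C * (((A + B).factorial : k)⁻¹ * (C.factorial : k)⁻¹ *
              ((A + B).choose A : k))
            = x (A + B) C * ((((A + B).factorial : k)⁻¹ * ((A + B).choose A : k)) *
              (C.factorial : k)⁻¹) := by ring
          _ = _ := by rw [this]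

lemma coeff_TT_v_uw (m : ℕ) (p : ℕ → ℕ) (x : ℕ → ℕ → k)
    (hsupp : ∀ i j, x i j ≠ 0 → i ≤ m ∧ j ≤ p i) (A B C : ℕ) :
    MvPolynomial.coeff (sig A B C)
      (TT k m p x (MvPolynomial.X 1) (MvPolynomial.X 0 + MvPolynomial.X 2)) =
      x B (A + C) *
        ((A.factorial : k)⁻¹ * (B.factorial : k)⁻¹ * (C.factorial : k)⁻¹) := by
  rw [TT]
  calc MvPolynomial.coeff (sig A B C) _
      = ∑ i ∈ Finset.range (m + 1), ∑ j ∈ Finset.range (p i + 1),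
          if B = i ∧ A + C = j then
            x i j * ((i.factorial : k)⁻¹ * (j.factorial : k)⁻¹ * (j.choose A : k)) else 0 := by
        rw [MvPolynomial.coeff_sum]
        refine Finset.sum_congr rfl fun i _ => ?_
        rw [MvPolynomial.coeff_sum]
        refine Finset.sum_congr rfl fun j _ => ?_
        rw [MvPolynomial.coeff_smul, MvPolynomial.coeff_smul, coeff_v_uw]
        by_cases h : B = i ∧ A + C = j
        · rw [if_pos h, if_pos h, smul_eq_mul, smul_eq_mul]
        · rw [if_neg h, if_neg h, smul_eq_mul, smul_eq_mul]; simp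
    _ = x B (A + C) * ((B.factorial : k)⁻¹ * ((A + C).factorial : k)⁻¹ *
          ((A + C).choose A : k)) := by
        refine mySumCollapse k m p _ B (A + C) fun i j hf => ?_
        refine hsupp i j fun hx => hf ?_
        rw [hx, zero_mul]
    _ = _ := by
        have := fact_inv_choose k A C
        push_cast at this ⊢
        calc x B (A + C) * ((B.factorial : k)⁻¹ * ((A + C).factorial : k)⁻¹ *
              ((A + C).choose A : k))
            = x B (A + C) * ((B.factorial : k)⁻¹ *
              (((A + C).factorial : k)⁻¹ * ((A + C).choose A : k))) := by ring
          _ = _ := by rw [this]; ring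

lemma coeff_TT_v_w (m : ℕ) (p : ℕ → ℕ) (x : ℕ → ℕ → k) (A B C : ℕ) (hA : A ≠ 0) :
    MvPolynomial.coeff (sig A B C)
      (TT k m p x (MvPolynomial.X 1) (MvPolynomial.X 2)) = 0 := by
  rw [TT, MvPolynomial.coeff_sum]
  apply Finset.sum_eq_zero; intro i _
  rw [MvPolynomial.coeff_sum]
  apply Finset.sum_eq_zero; intro j _
  rw [MvPolynomial.coeff_smul, MvPolynomial.coeff_smul, coeff_v_w,
    if_neg (by rintro ⟨h0, -⟩; exact hA h0.symm)]
  simp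

lemma sig_u (A B C : ℕ) : sig (A + 1) B C = Finsupp.single 0 1 + sig A B C := by
  rw [sig, sig, Finsupp.single_add]; abel

lemma sig_v (A B C : ℕ) : sig A (B + 1) C = sig A B C + Finsupp.single 1 1 := by
  rw [sig, sig, Finsupp.single_add]; abel

lemma sig_w (A B C : ℕ) : sig A B (C + 1) = sig A B C + Finsupp.single 2 1 := by
  rw [sig, sig, Finsupp.single_add]; abel

lemma sig_apply1 (A B C : ℕ) : (sig A B C) 1 = B := by
  simp [sig, Finsupp.single_apply]

lemma sig_apply2 (A B C : ℕ) : (sig A B C) 2 = C := by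
  simp [sig, Finsupp.single_apply]

lemma sig_nsupp1 (A C : ℕ) : (1 : Fin 3) ∉ (sig A 0 C).support := by
  simp [Finsupp.mem_support_iff, sig_apply1]

lemma sig_nsupp2 (A B : ℕ) : (2 : Fin 3) ∉ (sig A B 0).support := by
  simp [Finsupp.mem_support_iff, sig_apply2]

lemma sig_u' (A B C : ℕ) : sig (A + 1) B C = sig A B C + Finsupp.single 0 1 := by
  rw [sig, sig, Finsupp.single_add]; abel

lemma KEY (lam1 kap1 lam2 kap2 lam3 kap3 : k) (m : ℕ) (p : ℕ → ℕ) (x : ℕ → ℕ → k)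
    (hsupp : ∀ i j, x i j ≠ 0 → i ≤ m ∧ j ≤ p i)
    (hM : (MvPolynomial.C lam1 * MvPolynomial.X 0 - MvPolynomial.X 1 + MvPolynomial.C kap1) *
        TT k m p x (MvPolynomial.X 0 + MvPolynomial.X 1) (MvPolynomial.X 2)
      = TT k m p x (MvPolynomial.X 1) (MvPolynomial.X 2) *
          (MvPolynomial.C lam2 * MvPolynomial.X 0 -
            (MvPolynomial.X 1 + MvPolynomial.X 2) + MvPolynomial.C kap2)
        - (MvPolynomial.C lam3 * MvPolynomial.X 0 - MvPolynomial.X 2 + MvPolynomial.C kap3) *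
            TT k m p x (MvPolynomial.X 1) (MvPolynomial.X 0 + MvPolynomial.X 2))
    (n b c : ℕ) :
    (lam1 * ((n : k) + 2) - (b : k)) * x (n + 1 + b) c + kap1 * x (n + 2 + b) c +
      ((lam3 * ((n : k) + 2) - (c : k)) * x b (n + 1 + c) + kap3 * x b (n + 2 + c)) = 0 := by
  set T1 := TT k m p x (MvPolynomial.X 0 + MvPolynomial.X 1) (MvPolynomial.X 2) with hT1
  set T2 := TT k m p x (MvPolynomial.X 1) (MvPolynomial.X 2) with hT2
  set T3 := TT k m p x (MvPolynomial.X 1) (MvPolynomial.X 0 + MvPolynomial.X 2) with hT3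
  have hM' : MvPolynomial.C lam1 * (MvPolynomial.X 0 * T1) - T1 * MvPolynomial.X 1 +
      MvPolynomial.C kap1 * T1 +
      (MvPolynomial.C lam3 * (MvPolynomial.X 0 * T3) - T3 * MvPolynomial.X 2 +
        MvPolynomial.C kap3 * T3) =
      MvPolynomial.C lam2 * (T2 * MvPolynomial.X 0) - T2 * MvPolynomial.X 1 -
        T2 * MvPolynomial.X 2 + MvPolynomial.C kap2 * T2 := by
    linear_combination hM
  have h := congrArg (MvPolynomial.coeff (sig (n + 2) b c)) hM'
  simp only [MvPolynomial.coeff_add, MvPolynomial.coeff_sub, MvPolynomial.coeff_C_mul] at h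
  have en : n + 2 = (n + 1) + 1 := rfl
  have c1 : MvPolynomial.coeff (sig (n + 2) b c) (MvPolynomial.X 0 * T1)
      = x (n + 1 + b) c *
        (((n+1).factorial : k)⁻¹ * (b.factorial : k)⁻¹ * (c.factorial : k)⁻¹) := by
    rw [en, sig_u, MvPolynomial.coeff_X_mul, hT1, coeff_TT_uv k m p x hsupp]
  have c2 : MvPolynomial.coeff (sig (n + 2) b c) T1
      = x (n + 2 + b) c *
        (((n+2).factorial : k)⁻¹ * (b.factorial : k)⁻¹ * (c.factorial : k)⁻¹) := by
    rw [hT1, coeff_TT_uv k m p x hsupp]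
  have c3 : MvPolynomial.coeff (sig (n + 2) b c) (MvPolynomial.X 0 * T3)
      = x b (n + 1 + c) *
        (((n+1).factorial : k)⁻¹ * (b.factorial : k)⁻¹ * (c.factorial : k)⁻¹) := by
    rw [en, sig_u, MvPolynomial.coeff_X_mul, hT3, coeff_TT_v_uw k m p x hsupp]
  have c4 : MvPolynomial.coeff (sig (n + 2) b c) T3
      = x b (n + 2 + c) *
        (((n+2).factorial : k)⁻¹ * (b.factorial : k)⁻¹ * (c.factorial : k)⁻¹) := by
    rw [hT3, coeff_TT_v_uw k m p x hsupp]
  have r4 : MvPolynomial.coeff (sig (n + 2) b c) T2 = 0 := by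
    rw [hT2, coeff_TT_v_w k m p x _ _ _ (by omega)]
  have r1 : MvPolynomial.coeff (sig (n + 2) b c) (T2 * MvPolynomial.X 0) = 0 := by
    rw [en, sig_u', MvPolynomial.coeff_mul_X, hT2, coeff_TT_v_w k m p x _ _ _ (by omega)]
  rw [c1, c2, c3, c4, r4, r1] at h
  rcases b with _ | B
  · rcases c with _ | Cc
    · have c5 : MvPolynomial.coeff (sig (n + 2) 0 0) (T1 * MvPolynomial.X 1) = 0 := by
        rw [MvPolynomial.coeff_mul_X']; exact if_neg (sig_nsupp1 _ _)
      have c6 : MvPolynomial.coeff (sig (n + 2) 0 0) (T3 * MvPolynomial.X 2) = 0 := by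
        rw [MvPolynomial.coeff_mul_X']; exact if_neg (sig_nsupp2 _ _)
      have r2 : MvPolynomial.coeff (sig (n + 2) 0 0) (T2 * MvPolynomial.X 1) = 0 := by
        rw [MvPolynomial.coeff_mul_X']; exact if_neg (sig_nsupp1 _ _)
      have r3 : MvPolynomial.coeff (sig (n + 2) 0 0) (T2 * MvPolynomial.X 2) = 0 := by
        rw [MvPolynomial.coeff_mul_X']; exact if_neg (sig_nsupp2 _ _)
      rw [c5, c6, r2, r3] at h
      simp only [Nat.factorial_zero, Nat.cast_one, inv_one] at h
      have f1 : (((n+2).factorial : ℕ) : k) = ((n:k)+2) * ((n+1).factorial : k) := by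
        rw [en, Nat.factorial_succ]; push_cast; ring
      have hn2 : ((n:k)+2) ≠ 0 := by
        rw [show ((n:k)+2) = ((n+2 : ℕ) : k) from by push_cast; ring]
        exact Nat.cast_ne_zero.2 (by omega)
      have g1 : (((n+1).factorial : ℕ) : k)⁻¹ = ((n:k)+2) * (((n+2).factorial : ℕ) : k)⁻¹ := by
        rw [f1, mul_inv, ← mul_assoc, mul_inv_cancel₀ hn2, one_mul]
      rw [g1] at h
      have hQ : (((n+2).factorial : ℕ) : k)⁻¹ ≠ 0 :=
        inv_ne_zero (Nat.cast_ne_zero.2 (Nat.factorial_ne_zero _))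
      have goal' : (((n+2).factorial : ℕ) : k)⁻¹ *
          ((lam1 * ((n : k) + 2) - 0) * x (n + 1 + 0) 0 + kap1 * x (n + 2 + 0) 0 +
            ((lam3 * ((n : k) + 2) - 0) * x 0 (n + 1 + 0) + kap3 * x 0 (n + 2 + 0))) = 0 := by
        linear_combination h
      have h2 := (mul_eq_zero.mp goal').resolve_left hQ
      push_cast
      linear_combination h2
    · have c5 : MvPolynomial.coeff (sig (n + 2) 0 (Cc + 1)) (T1 * MvPolynomial.X 1) = 0 := by
        rw [MvPolynomial.coeff_mul_X']; exact if_neg (sig_nsupp1 _ _)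
      have r2 : MvPolynomial.coeff (sig (n + 2) 0 (Cc + 1)) (T2 * MvPolynomial.X 1) = 0 := by
        rw [MvPolynomial.coeff_mul_X']; exact if_neg (sig_nsupp1 _ _)
      have c6 : MvPolynomial.coeff (sig (n + 2) 0 (Cc + 1)) (T3 * MvPolynomial.X 2)
          = x 0 (n + 2 + Cc) * (((n+2).factorial : k)⁻¹ * ((0).factorial : k)⁻¹ *
            (Cc.factorial : k)⁻¹) := by
        rw [sig_w, MvPolynomial.coeff_mul_X, hT3, coeff_TT_v_uw k m p x hsupp]
      have r3 : MvPolynomial.coeff (sig (n + 2) 0 (Cc + 1)) (T2 * MvPolynomial.X 2) = 0 := by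
        rw [sig_w, MvPolynomial.coeff_mul_X, hT2, coeff_TT_v_w k m p x _ _ _ (by omega)]
      rw [c5, c6, r2, r3] at h
      rw [show n + 2 + Cc = n + 1 + (Cc + 1) from by omega] at h
      simp only [Nat.factorial_zero, Nat.cast_one, inv_one] at h
      have f1 : (((n+2).factorial : ℕ) : k) = ((n:k)+2) * ((n+1).factorial : k) := by
        rw [en, Nat.factorial_succ]; push_cast; ring
      have f3 : (((Cc+1).factorial : ℕ) : k) = ((Cc:k)+1) * (Cc.factorial : k) := by
        rw [Nat.factorial_succ]; push_cast; ring
      have hn2 : ((n:k)+2) ≠ 0 := by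
        rw [show ((n:k)+2) = ((n+2 : ℕ) : k) from by push_cast; ring]
        exact Nat.cast_ne_zero.2 (by omega)
      have hc1 : ((Cc:k)+1) ≠ 0 := by
        rw [show ((Cc:k)+1) = ((Cc+1 : ℕ) : k) from by push_cast; ring]
        exact Nat.cast_ne_zero.2 (by omega)
      have g1 : (((n+1).factorial : ℕ) : k)⁻¹ = ((n:k)+2) * (((n+2).factorial : ℕ) : k)⁻¹ := by
        rw [f1, mul_inv, ← mul_assoc, mul_inv_cancel₀ hn2, one_mul]
      have g3 : ((Cc.factorial : ℕ) : k)⁻¹ = ((Cc:k)+1) * (((Cc+1).factorial : ℕ) : k)⁻¹ := by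
        rw [f3, mul_inv, ← mul_assoc, mul_inv_cancel₀ hc1, one_mul]
      rw [g1, g3] at h
      have hQ : (((n+2).factorial : ℕ) : k)⁻¹ * (((Cc+1).factorial : ℕ) : k)⁻¹ ≠ 0 :=
        mul_ne_zero (inv_ne_zero (Nat.cast_ne_zero.2 (Nat.factorial_ne_zero _)))
          (inv_ne_zero (Nat.cast_ne_zero.2 (Nat.factorial_ne_zero _)))
      have goal' : ((((n+2).factorial : ℕ) : k)⁻¹ * (((Cc+1).factorial : ℕ) : k)⁻¹) *
          ((lam1 * ((n : k) + 2) - 0) * x (n + 1 + 0) (Cc+1) + kap1 * x (n + 2 + 0) (Cc+1) +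
            ((lam3 * ((n : k) + 2) - ((Cc:k)+1)) * x 0 (n + 1 + (Cc+1)) +
              kap3 * x 0 (n + 2 + (Cc+1)))) = 0 := by
        linear_combination h
      have h2 := (mul_eq_zero.mp goal').resolve_left hQ
      push_cast
      linear_combination h2
  · rcases c with _ | Cc
    · have c5 : MvPolynomial.coeff (sig (n + 2) (B + 1) 0) (T1 * MvPolynomial.X 1)
          = x (n + 2 + B) 0 * (((n+2).factorial : k)⁻¹ * (B.factorial : k)⁻¹ *
            ((0).factorial : k)⁻¹) := by
        rw [sig_v, MvPolynomial.coeff_mul_X, hT1, coeff_TT_uv k m p x hsupp]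
      have r2 : MvPolynomial.coeff (sig (n + 2) (B + 1) 0) (T2 * MvPolynomial.X 1) = 0 := by
        rw [sig_v, MvPolynomial.coeff_mul_X, hT2, coeff_TT_v_w k m p x _ _ _ (by omega)]
      have c6 : MvPolynomial.coeff (sig (n + 2) (B + 1) 0) (T3 * MvPolynomial.X 2) = 0 := by
        rw [MvPolynomial.coeff_mul_X']; exact if_neg (sig_nsupp2 _ _)
      have r3 : MvPolynomial.coeff (sig (n + 2) (B + 1) 0) (T2 * MvPolynomial.X 2) = 0 := by
        rw [MvPolynomial.coeff_mul_X']; exact if_neg (sig_nsupp2 _ _)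
      rw [c5, c6, r2, r3] at h
      rw [show n + 2 + B = n + 1 + (B + 1) from by omega] at h
      simp only [Nat.factorial_zero, Nat.cast_one, inv_one] at h
      have f1 : (((n+2).factorial : ℕ) : k) = ((n:k)+2) * ((n+1).factorial : k) := by
        rw [en, Nat.factorial_succ]; push_cast; ring
      have f2 : (((B+1).factorial : ℕ) : k) = ((B:k)+1) * (B.factorial : k) := by
        rw [Nat.factorial_succ]; push_cast; ring
      have hn2 : ((n:k)+2) ≠ 0 := by
        rw [show ((n:k)+2) = ((n+2 : ℕ) : k) from by push_cast; ring]
        exact Nat.cast_ne_zero.2 (by omega)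
      have hb1 : ((B:k)+1) ≠ 0 := by
        rw [show ((B:k)+1) = ((B+1 : ℕ) : k) from by push_cast; ring]
        exact Nat.cast_ne_zero.2 (by omega)
      have g1 : (((n+1).factorial : ℕ) : k)⁻¹ = ((n:k)+2) * (((n+2).factorial : ℕ) : k)⁻¹ := by
        rw [f1, mul_inv, ← mul_assoc, mul_inv_cancel₀ hn2, one_mul]
      have g2 : ((B.factorial : ℕ) : k)⁻¹ = ((B:k)+1) * (((B+1).factorial : ℕ) : k)⁻¹ := by
        rw [f2, mul_inv, ← mul_assoc, mul_inv_cancel₀ hb1, one_mul]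
      rw [g1, g2] at h
      have hQ : (((n+2).factorial : ℕ) : k)⁻¹ * (((B+1).factorial : ℕ) : k)⁻¹ ≠ 0 :=
        mul_ne_zero (inv_ne_zero (Nat.cast_ne_zero.2 (Nat.factorial_ne_zero _)))
          (inv_ne_zero (Nat.cast_ne_zero.2 (Nat.factorial_ne_zero _)))
      have goal' : ((((n+2).factorial : ℕ) : k)⁻¹ * (((B+1).factorial : ℕ) : k)⁻¹) *
          ((lam1 * ((n : k) + 2) - ((B:k)+1)) * x (n + 1 + (B+1)) 0 +
            kap1 * x (n + 2 + (B+1)) 0 +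
            ((lam3 * ((n : k) + 2) - 0) * x (B+1) (n + 1 + 0) +
              kap3 * x (B+1) (n + 2 + 0))) = 0 := by
        linear_combination h
      have h2 := (mul_eq_zero.mp goal').resolve_left hQ
      push_cast
      linear_combination h2
    · have c5 : MvPolynomial.coeff (sig (n + 2) (B + 1) (Cc + 1)) (T1 * MvPolynomial.X 1)
          = x (n + 2 + B) (Cc + 1) * (((n+2).factorial : k)⁻¹ * (B.factorial : k)⁻¹ *
            ((Cc+1).factorial : k)⁻¹) := by
        rw [sig_v, MvPolynomial.coeff_mul_X, hT1, coeff_TT_uv k m p x hsupp]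
      have c6 : MvPolynomial.coeff (sig (n + 2) (B + 1) (Cc + 1)) (T3 * MvPolynomial.X 2)
          = x (B + 1) (n + 2 + Cc) * (((n+2).factorial : k)⁻¹ * ((B+1).factorial : k)⁻¹ *
            (Cc.factorial : k)⁻¹) := by
        rw [sig_w, MvPolynomial.coeff_mul_X, hT3, coeff_TT_v_uw k m p x hsupp]
      have r2 : MvPolynomial.coeff (sig (n + 2) (B + 1) (Cc + 1)) (T2 * MvPolynomial.X 1) = 0 := by
        rw [sig_v, MvPolynomial.coeff_mul_X, hT2, coeff_TT_v_w k m p x _ _ _ (by omega)]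
      have r3 : MvPolynomial.coeff (sig (n + 2) (B + 1) (Cc + 1)) (T2 * MvPolynomial.X 2) = 0 := by
        rw [sig_w, MvPolynomial.coeff_mul_X, hT2, coeff_TT_v_w k m p x _ _ _ (by omega)]
      rw [c5, c6, r2, r3] at h
      rw [show n + 2 + B = n + 1 + (B + 1) from by omega,
        show n + 2 + Cc = n + 1 + (Cc + 1) from by omega] at h
      have f1 : (((n+2).factorial : ℕ) : k) = ((n:k)+2) * ((n+1).factorial : k) := by
        rw [en, Nat.factorial_succ]; push_cast; ring
      have f2 : (((B+1).factorial : ℕ) : k) = ((B:k)+1) * (B.factorial : k) := by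
        rw [Nat.factorial_succ]; push_cast; ring
      have f3 : (((Cc+1).factorial : ℕ) : k) = ((Cc:k)+1) * (Cc.factorial : k) := by
        rw [Nat.factorial_succ]; push_cast; ring
      have hn : (((n+1).factorial : ℕ) : k) ≠ 0 := Nat.cast_ne_zero.2 (n+1).factorial_ne_zero
      have hb : ((B.factorial : ℕ) : k) ≠ 0 := Nat.cast_ne_zero.2 B.factorial_ne_zero
      have hc : ((Cc.factorial : ℕ) : k) ≠ 0 := Nat.cast_ne_zero.2 Cc.factorial_ne_zero
      have hn2 : ((n:k)+2) ≠ 0 := by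
        rw [show ((n:k)+2) = ((n+2 : ℕ) : k) from by push_cast; ring]
        exact Nat.cast_ne_zero.2 (by omega)
      have hb1 : ((B:k)+1) ≠ 0 := by
        rw [show ((B:k)+1) = ((B+1 : ℕ) : k) from by push_cast; ring]
        exact Nat.cast_ne_zero.2 (by omega)
      have hc1 : ((Cc:k)+1) ≠ 0 := by
        rw [show ((Cc:k)+1) = ((Cc+1 : ℕ) : k) from by push_cast; ring]
        exact Nat.cast_ne_zero.2 (by omega)
      have g1 : (((n+1).factorial : ℕ) : k)⁻¹ = ((n:k)+2) * (((n+2).factorial : ℕ) : k)⁻¹ := by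
        rw [f1, mul_inv, ← mul_assoc, mul_inv_cancel₀ hn2, one_mul]
      have g2 : ((B.factorial : ℕ) : k)⁻¹ = ((B:k)+1) * (((B+1).factorial : ℕ) : k)⁻¹ := by
        rw [f2, mul_inv, ← mul_assoc, mul_inv_cancel₀ hb1, one_mul]
      have g3 : ((Cc.factorial : ℕ) : k)⁻¹ = ((Cc:k)+1) * (((Cc+1).factorial : ℕ) : k)⁻¹ := by
        rw [f3, mul_inv, ← mul_assoc, mul_inv_cancel₀ hc1, one_mul]
      rw [g1, g2, g3] at h
      have hQ : (((n+2).factorial : ℕ) : k)⁻¹ * (((B+1).factorial : ℕ) : k)⁻¹ *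
          (((Cc+1).factorial : ℕ) : k)⁻¹ ≠ 0 := by
        apply mul_ne_zero (mul_ne_zero _ _) <;>
          exact inv_ne_zero (Nat.cast_ne_zero.2 (Nat.factorial_ne_zero _))
      have goal' : ((((n+2).factorial : ℕ) : k)⁻¹ * (((B+1).factorial : ℕ) : k)⁻¹ *
          (((Cc+1).factorial : ℕ) : k)⁻¹) *
          ((lam1 * ((n : k) + 2) - ((B:k)+1)) * x (n + 1 + (B+1)) (Cc+1) +
            kap1 * x (n + 2 + (B+1)) (Cc+1) +
            ((lam3 * ((n : k) + 2) - ((Cc:k)+1)) * x (B+1) (n + 1 + (Cc+1)) +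
              kap3 * x (B+1) (n + 2 + (Cc+1)))) = 0 := by
        linear_combination h
      have h2 := (mul_eq_zero.mp goal').resolve_left hQ
      push_cast
      linear_combination h2

/-- **Lemma 4.5:** if `p_m = 1` then `λ₃ = 0` and `m ≤ 2`. -/
theorem intertwining_pm_one
    (k : Type) [Field k] [CharZero k]
    (lam1 kap1 lam2 kap2 lam3 kap3 : k)
    (m : ℕ) (p : ℕ → ℕ) (x : ℕ → ℕ → k) (γ : HH k)
    (hγ : γ = ∑ i ∈ Finset.range (m + 1), ∑ j ∈ Finset.range (p i + 1),
      x i j • (sp k i ⊗ₜ[k] sp k j))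
    (hne : γ ≠ 0)
    (hsupp : ∀ i j, x i j ≠ 0 → i ≤ m ∧ j ≤ p i)
    (hm : ∃ j, x m j ≠ 0)
    (hp : ∀ i, x i (p i) ≠ 0 ∨ (p i = 0 ∧ ∀ j, x i j = 0))
    (heq : opL k (betaE k lam1 kap1) γ =
      opR k γ (betaE k lam2 kap2) - sw12 k (opR k (betaE k lam3 kap3) γ))
    (hpm : p m = 1) :
    lam3 = 0 ∧ m ≤ 2 := by
  have key := KEY k lam1 kap1 lam2 kap2 lam3 kap3 m p x hsupp
    (master k lam1 kap1 lam2 kap2 lam3 kap3 m p x γ hγ heq)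
  have hx2 : x m 2 = 0 := by
    by_contra hc
    have := (hsupp m 2 hc).2
    rw [hpm] at this; omega
  have hx1 : x m 1 ≠ 0 := by
    rcases hp m with h | ⟨h0, _⟩
    · rwa [hpm] at h
    · rw [hpm] at h0; exact absurd h0 one_ne_zero
  have hhi : ∀ i j, m < i → x i j = 0 := by
    intro i j hi
    by_contra hc
    exact absurd (hsupp i j hc).1 (by omega)
  -- part 1 : lam3 = 0
  have hl3 : lam3 = 0 := by
    have k0 := key 0 m 0
    rw [show 0 + 1 + m = m + 1 from by omega, show 0 + 2 + m = m + 2 from by omega,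
      show 0 + 1 + 0 = 1 from by omega, show 0 + 2 + 0 = 2 from by omega,
      hhi (m + 1) 0 (by omega), hhi (m + 2) 0 (by omega), hx2] at k0
    push_cast at k0
    have h' : lam3 * (2 * x m 1) = 0 := by linear_combination k0
    rcases mul_eq_zero.mp h' with h | h
    · exact h
    · exact absurd (by linear_combination h / 2) hx1
  refine ⟨hl3, ?_⟩
  by_contra hm2
  obtain ⟨M, rfl⟩ : ∃ M, m = M + 3 := ⟨m - 3, by omega⟩
  rw [hl3] at key
  -- row M+2
  have k1 := key 1 (M+2) 1
  rw [show 1 + 1 + (M + 2) = M + 4 from by omega, show 1 + 2 + (M + 2) = M + 5 from by omega,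
    show 1 + 1 + 1 = 3 from by omega, show 1 + 2 + 1 = 4 from by omega,
    hhi (M+4) 1 (by omega), hhi (M+5) 1 (by omega)] at k1
  have k2 := key 2 (M+2) 0
  rw [show 2 + 1 + (M + 2) = M + 5 from by omega, show 2 + 2 + (M + 2) = M + 6 from by omega,
    show 2 + 1 + 0 = 3 from by omega, show 2 + 2 + 0 = 4 from by omega,
    hhi (M+5) 0 (by omega), hhi (M+6) 0 (by omega)] at k2
  have hA : x (M+2) 3 = 0 := by push_cast at k1 k2; linear_combination k2 - k1
  have k3 := key 0 (M+2) 1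
  rw [show 0 + 1 + (M + 2) = M + 3 from by omega, show 0 + 2 + (M + 2) = M + 4 from by omega,
    show 0 + 1 + 1 = 2 from by omega, show 0 + 2 + 1 = 3 from by omega,
    hhi (M+4) 1 (by omega)] at k3
  have hB : x (M+2) 2 = (2*lam1 - ((M:k)+2)) * x (M+3) 1 := by
    push_cast at k3; linear_combination kap3 * hA - k3
  -- row M+1
  have k4 := key 2 (M+1) 1
  rw [show 2 + 1 + (M + 1) = M + 4 from by omega, show 2 + 2 + (M + 1) = M + 5 from by omega,
    show 2 + 1 + 1 = 4 from by omega, show 2 + 2 + 1 = 5 from by omega,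
    hhi (M+4) 1 (by omega), hhi (M+5) 1 (by omega)] at k4
  have k5 := key 3 (M+1) 0
  rw [show 3 + 1 + (M + 1) = M + 5 from by omega, show 3 + 2 + (M + 1) = M + 6 from by omega,
    show 3 + 1 + 0 = 4 from by omega, show 3 + 2 + 0 = 5 from by omega,
    hhi (M+5) 0 (by omega), hhi (M+6) 0 (by omega)] at k5
  have hC4 : x (M+1) 4 = 0 := by push_cast at k4 k5; linear_combination k5 - k4
  have k6 := key 1 (M+1) 1
  rw [show 1 + 1 + (M + 1) = M + 3 from by omega, show 1 + 2 + (M + 1) = M + 4 from by omega,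
    show 1 + 1 + 1 = 3 from by omega, show 1 + 2 + 1 = 4 from by omega,
    hhi (M+4) 1 (by omega)] at k6
  have hD : x (M+1) 3 = (3*lam1 - ((M:k)+1)) * x (M+3) 1 := by
    push_cast at k6; linear_combination kap3 * hC4 - k6
  have k7 := key 0 (M+1) 2
  rw [show 0 + 1 + (M + 1) = M + 2 from by omega, show 0 + 2 + (M + 1) = M + 3 from by omega,
    show 0 + 1 + 2 = 3 from by omega, show 0 + 2 + 2 = 4 from by omega, hx2] at k7
  have hC : (2*lam1 - ((M:k)+1)) * x (M+2) 2 - 2 * x (M+1) 3 = 0 := by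
    push_cast at k7; linear_combination k7 - kap3 * hC4
  -- row M
  have k8 := key 3 M 1
  rw [show 3 + 1 + M = M + 4 from by omega, show 3 + 2 + M = M + 5 from by omega,
    show 3 + 1 + 1 = 5 from by omega, show 3 + 2 + 1 = 6 from by omega,
    hhi (M+4) 1 (by omega), hhi (M+5) 1 (by omega)] at k8
  have k9 := key 4 M 0
  rw [show 4 + 1 + M = M + 5 from by omega, show 4 + 2 + M = M + 6 from by omega,
    show 4 + 1 + 0 = 5 from by omega, show 4 + 2 + 0 = 6 from by omega,
    hhi (M+5) 0 (by omega), hhi (M+6) 0 (by omega)] at k9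
  have hE5 : x M 5 = 0 := by push_cast at k8 k9; linear_combination k9 - k8
  have k10 := key 2 M 1
  rw [show 2 + 1 + M = M + 3 from by omega, show 2 + 2 + M = M + 4 from by omega,
    show 2 + 1 + 1 = 4 from by omega, show 2 + 2 + 1 = 5 from by omega,
    hhi (M+4) 1 (by omega)] at k10
  have hF : x M 4 = (4*lam1 - (M:k)) * x (M+3) 1 := by
    push_cast at k10; linear_combination kap3 * hE5 - k10
  have k11 := key 1 M 2
  rw [show 1 + 1 + M = M + 2 from by omega, show 1 + 2 + M = M + 3 from by omega,
    show 1 + 1 + 2 = 4 from by omega, show 1 + 2 + 2 = 5 from by omega, hx2] at k11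
  have hG : (3*lam1 - (M:k)) * x (M+2) 2 - 2 * x M 4 = 0 := by
    push_cast at k11; linear_combination k11 - kap3 * hE5
  -- combine
  have hCC : ((2*lam1 - ((M:k)+2)) * (2*lam1 - ((M:k)+1)) - 2*(3*lam1 - ((M:k)+1))) *
      x (M+3) 1 = 0 := by
    linear_combination hC - (2*lam1 - ((M:k)+1)) * hB + 2 * hD
  have hDD : ((3*lam1 - (M:k)) * (2*lam1 - ((M:k)+2)) - 2*(4*lam1 - (M:k))) *
      x (M+3) 1 = 0 := by
    linear_combination hG - (3*lam1 - (M:k)) * hB + 2 * hF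
  have hC2 := (mul_eq_zero.mp hCC).resolve_right hx1
  have hD2 := (mul_eq_zero.mp hDD).resolve_right hx1
  have castne : ∀ r : ℕ, 0 < r → ((M:k) + (r:k)) ≠ 0 := by
    intro r hr hzero
    have : ((M + r : ℕ) : k) = 0 := by push_cast; linear_combination hzero
    exact absurd (Nat.cast_eq_zero.mp this) (by omega)
  have hE : (lam1 + 1) * (2*lam1 - (M:k) - 4) = 0 := by linear_combination hD2 - hC2
  rcases mul_eq_zero.mp hE with h1 | h2
  · have ht : lam1 = -1 := by linear_combination h1
    rw [ht] at hC2
    have hMM : ((M:k) + 4) * ((M:k) + 5) = 0 := by linear_combination hC2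
    rcases mul_eq_zero.mp hMM with h | h
    · exact castne 4 (by omega) (by push_cast; linear_combination h)
    · exact castne 5 (by omega) (by push_cast; linear_combination h)
  · have hM4 : (M:k) = 2*lam1 - 4 := by linear_combination -h2
    rw [hM4] at hC2
    have ht0 : lam1 = 0 := by linear_combination (-1/2 : k) * hC2
    rw [ht0] at hM4
    exact castne 4 (by omega) (by push_cast; linear_combination hM4)


end
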